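/- Let Z be a complex Banach space, w ∈ ℂ with Re(w) > 0, τ > 0, q ≥ 1, and let h : [0,∞) → Z be of class C^q with h^{(q)} bounded. Define φ(t) := (τw)^{−1} ∫_0^∞ exp(−s/(τw)) h(t+s) ds. Then for every t ≥ 0, ‖ φ(t) − Σ_{j=0}^{q−1} (τ w)^j h^{(j)}(t) ‖ ≤ τ^q · |w|^{2q+1} / (Re w)^{q+1} · sup_{s ≥ 0} ‖h^{(q)}(s)‖. -/

import Mathlib

open MeasureTheory Set Filter

namespace Stmt18Aux

lemma int_pow_exp {a : ℝ} (ha : 0 < a) (i : ℕ) :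
    IntegrableOn (fun s : ℝ => s ^ i * Real.exp (-(a * s))) (Set.Ioi 0) := by
  have hi : (-1 : ℝ) < (i : ℝ) :=
    lt_of_lt_of_le neg_one_lt_zero (Nat.cast_nonneg i)
  have h := integrableOn_rpow_mul_exp_neg_mul_rpow (s := (i : ℝ)) (p := 1) hi zero_lt_one ha
  simpa [Real.rpow_natCast, Real.rpow_one, neg_mul] using h

lemma int_one_add_pow_exp {a : ℝ} (ha : 0 < a) (k : ℕ) :
    IntegrableOn (fun s : ℝ => (1 + s) ^ k * Real.exp (-(a * s))) (Set.Ioi 0) := by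
  have heq : (fun s : ℝ => (1 + s) ^ k * Real.exp (-(a * s)))
      = fun s => ∑ i ∈ Finset.range (k + 1),
          (k.choose i : ℝ) * (s ^ i * Real.exp (-(a * s))) := by
    funext s
    rw [add_comm (1 : ℝ) s, add_pow, Finset.sum_mul]
    refine Finset.sum_congr rfl fun i _ => by ring
  rw [heq]
  exact integrable_finset_sum _ fun i _ => (int_pow_exp ha i).const_mul _

lemma tendsto_one_add_pow_exp {a : ℝ} (ha : 0 < a) (k : ℕ) :
    Tendsto (fun s : ℝ => (1 + s) ^ k * Real.exp (-(a * s))) atTop (nhds 0) := by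
  have h0 := Real.tendsto_pow_mul_exp_neg_atTop_nhds_zero k
  have h1 : Tendsto (fun s : ℝ => a * (1 + s)) atTop atTop :=
    (tendsto_atTop_add_const_left atTop 1 tendsto_id).const_mul_atTop ha
  have h2 := (h0.comp h1).const_mul ((a ^ k)⁻¹ * Real.exp a)
  rw [mul_zero] at h2
  refine h2.congr fun s => ?_
  have hea : Real.exp (-(a * (1 + s))) = (Real.exp a)⁻¹ * Real.exp (-(a * s)) := by
    rw [← Real.exp_neg, ← Real.exp_add]
    ring_nf
  simp only [Function.comp_apply, mul_pow, hea]
  have hak : (a : ℝ) ^ k ≠ 0 := pow_ne_zero _ ha.ne'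
  have hexp : Real.exp a ≠ 0 := (Real.exp_pos a).ne'
  field_simp

lemma integral_exp_neg_mul {a : ℝ} (ha : 0 < a) :
    ∫ s in Set.Ioi (0 : ℝ), Real.exp (-(a * s)) = a⁻¹ := by
  have hd : ∀ x ∈ Ici (0 : ℝ), HasDerivAt (fun s : ℝ => -a⁻¹ * Real.exp (-(a * s)))
      (Real.exp (-(a * x))) x := by
    intro x _
    have h1 : HasDerivAt (fun s : ℝ => -(a * s)) (-a) x := by
      exact ((hasDerivAt_id x).const_mul a).neg.congr_deriv (by simp)
    have h2 := (h1.exp).const_mul (-a⁻¹)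
    refine h2.congr_deriv ?_
    rw [show -a⁻¹ * (Real.exp (-(a * x)) * -a) = (a⁻¹ * a) * Real.exp (-(a * x)) by ring,
      inv_mul_cancel₀ ha.ne', one_mul]
  have hint : IntegrableOn (fun s : ℝ => Real.exp (-(a * s))) (Ioi 0) := by
    simpa [neg_mul] using exp_neg_integrableOn_Ioi 0 ha
  have htend : Tendsto (fun s : ℝ => -a⁻¹ * Real.exp (-(a * s))) atTop (nhds 0) := by
    have hbot : Tendsto (fun s : ℝ => -(a * s)) atTop atBot := by
      apply tendsto_neg_atBot_iff.mpr
      exact tendsto_id.const_mul_atTop ha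
    have h3 : Tendsto (fun s : ℝ => Real.exp (-(a * s))) atTop (nhds 0) :=
      Real.tendsto_exp_atBot.comp hbot
    simpa using h3.const_mul (-a⁻¹)
  have := integral_Ioi_of_hasDerivAt_of_tendsto' hd hint htend
  simpa using this

variable {Z : Type*} [NormedAddCommGroup Z] [NormedSpace ℂ Z]

lemma norm_exp_smul_le {g : ℝ → Z} {c : ℂ} {B : ℝ} {k : ℕ}
    (hB : ∀ x, 0 ≤ x → ‖g x‖ ≤ B * (1 + x) ^ k)
    {t : ℝ} (ht : 0 ≤ t) {s : ℝ} (hs : 0 ≤ s) :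
    ‖Complex.exp (-(c * s)) • g (t + s)‖
      ≤ (B * (1 + t) ^ k) * ((1 + s) ^ k * Real.exp (-(c.re * s))) := by
  have hB0 : 0 ≤ B := le_trans (norm_nonneg (g 0)) (by simpa using hB 0 le_rfl)
  rw [norm_smul]
  have hexp : ‖Complex.exp (-(c * s))‖ = Real.exp (-(c.re * s)) := by
    rw [Complex.norm_exp]
    congr 1
    simp [Complex.mul_re]
  rw [hexp]
  have h1 : ‖g (t + s)‖ ≤ B * ((1 + t) * (1 + s)) ^ k := by
    refine (hB (t + s) (by linarith)).trans ?_
    have hle : (1 : ℝ) + (t + s) ≤ (1 + t) * (1 + s) := by nlinarith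
    have hp := pow_le_pow_left₀ (by linarith : (0:ℝ) ≤ 1 + (t + s)) hle k
    exact mul_le_mul_of_nonneg_left hp hB0
  calc Real.exp (-(c.re * s)) * ‖g (t + s)‖
      ≤ Real.exp (-(c.re * s)) * (B * ((1 + t) * (1 + s)) ^ k) := by
        have := Real.exp_pos (-(c.re * s))
        gcongr
    _ = (B * (1 + t) ^ k) * ((1 + s) ^ k * Real.exp (-(c.re * s))) := by
        rw [mul_pow]; ring

lemma integrableOn_exp_smul {g : ℝ → Z} (hgc : Continuous g) {c : ℂ} (hc : 0 < c.re)
    {B : ℝ} {k : ℕ} (hB : ∀ x, 0 ≤ x → ‖g x‖ ≤ B * (1 + x) ^ k)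
    {t : ℝ} (ht : 0 ≤ t) :
    IntegrableOn (fun s : ℝ => Complex.exp (-(c * s)) • g (t + s)) (Set.Ioi 0) := by
  refine ((int_one_add_pow_exp hc k).const_mul (B * (1 + t) ^ k)).mono' ?_ ?_
  · refine Continuous.aestronglyMeasurable ?_ |>.restrict
    exact (Complex.continuous_exp.comp (by continuity)).smul (hgc.comp (by continuity))
  · rw [ae_restrict_iff' measurableSet_Ioi]
    filter_upwards with s hs
    exact norm_exp_smul_le hB ht (le_of_lt hs)

variable [CompleteSpace Z]

lemma step {g : ℝ → Z} (hg : Differentiable ℝ g) (hg' : Continuous (deriv g))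
    {c : ℂ} (hc : 0 < c.re)
    {B : ℝ} {k : ℕ} (hB : ∀ x, 0 ≤ x → ‖g x‖ ≤ B * (1 + x) ^ k)
    {B' : ℝ} {k' : ℕ} (hB' : ∀ x, 0 ≤ x → ‖deriv g x‖ ≤ B' * (1 + x) ^ k')
    {t : ℝ} (ht : 0 ≤ t) :
    ∫ s in Set.Ioi (0 : ℝ), Complex.exp (-(c * s)) • g (t + s)
      = c⁻¹ • g t
        + c⁻¹ • ∫ s in Set.Ioi (0 : ℝ), Complex.exp (-(c * s)) • deriv g (t + s) := by
  have hc0 : c ≠ 0 := fun hcc => by simp [hcc] at hc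
  set A : ℝ → Z := fun s => Complex.exp (-(c * s)) • g (t + s) with hA_def
  set Bf : ℝ → Z := fun s => Complex.exp (-(c * s)) • deriv g (t + s) with hBf_def
  have hAint : IntegrableOn A (Set.Ioi 0) := integrableOn_exp_smul hg.continuous hc hB ht
  have hBint : IntegrableOn Bf (Set.Ioi 0) := integrableOn_exp_smul hg' hc hB' ht
  set F : ℝ → Z := fun s => (-c⁻¹ * Complex.exp (-(c * s))) • g (t + s) with hF_def
  have hderiv : ∀ x ∈ Ici (0 : ℝ), HasDerivAt F (A x - c⁻¹ • Bf x) x := by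
    intro x _
    have hlin : HasDerivAt (fun s : ℝ => -(c * (s : ℂ))) (-c) x := by
      have h0 : HasDerivAt (fun s : ℝ => (s : ℂ)) 1 x := by
        exact Complex.ofRealCLM.hasDerivAt (x := x)
      exact (h0.const_mul c).neg.congr_deriv (by simp)
    have hu : HasDerivAt (fun s : ℝ => -c⁻¹ * Complex.exp (-(c * s)))
        (-c⁻¹ * (Complex.exp (-(c * x)) * -c)) x := (hlin.cexp).const_mul (-c⁻¹)
    have hv : HasDerivAt (fun s : ℝ => g (t + s)) (deriv g (t + x)) x :=
      ((hg (t + x)).hasDerivAt).comp_const_add t x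
    have hF' := hu.smul hv
    have hcoef : -c⁻¹ * (Complex.exp (-(c * x)) * -c) = Complex.exp (-(c * x)) := by
      field_simp
    rw [hcoef] at hF'
    refine hF'.congr_deriv ?_
    simp only [hA_def, hBf_def]
    rw [smul_smul]
    module
  have hint : IntegrableOn (fun x => A x - c⁻¹ • Bf x) (Set.Ioi 0) :=
    hAint.sub (hBint.smul c⁻¹)
  have htend : Tendsto F atTop (nhds 0) := by
    apply squeeze_zero_norm' (a := fun s =>
      (‖c⁻¹‖ * (B * (1 + t) ^ k)) * ((1 + s) ^ k * Real.exp (-(c.re * s))))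
    · filter_upwards [eventually_ge_atTop (0 : ℝ)] with s hs
      have h1 := norm_exp_smul_le (c := c) hB ht hs
      have : ‖F s‖ = ‖c⁻¹‖ * ‖Complex.exp (-(c * s)) • g (t + s)‖ := by
        simp only [hF_def]
        rw [neg_mul, neg_smul, norm_neg, mul_smul, norm_smul]
      rw [this, mul_assoc]
      exact mul_le_mul_of_nonneg_left h1 (norm_nonneg _)
    · simpa using (tendsto_one_add_pow_exp hc k).const_mul (‖c⁻¹‖ * (B * (1 + t) ^ k))
  have hFTC := integral_Ioi_of_hasDerivAt_of_tendsto' hderiv hint htend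
  have hF0 : F 0 = -c⁻¹ • g t := by
    simp [hF_def]
  rw [hF0, zero_sub, neg_smul, neg_neg] at hFTC
  have hsplit : ∫ s in Set.Ioi (0 : ℝ), (A s - c⁻¹ • Bf s)
      = (∫ s in Set.Ioi (0 : ℝ), A s) - c⁻¹ • ∫ s in Set.Ioi (0 : ℝ), Bf s := by
    have hBint' : IntegrableOn (fun s : ℝ => c⁻¹ • Bf s) (Set.Ioi 0) volume := by
      exact hBint.smul c⁻¹
    rw [integral_sub hAint hBint', integral_smul]
  rw [hsplit, sub_eq_iff_eq_add] at hFTC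
  exact hFTC

lemma growth_step {g : ℝ → Z} (hg : Differentiable ℝ g)
    {B : ℝ} {k : ℕ} (hB : ∀ x, 0 ≤ x → ‖deriv g x‖ ≤ B * (1 + x) ^ k) :
    ∀ x, 0 ≤ x → ‖g x‖ ≤ (‖g 0‖ + B) * (1 + x) ^ (k + 1) := by
  intro x hx
  have hB0 : 0 ≤ B := le_trans (norm_nonneg _) (by simpa using hB 0 le_rfl)
  have key : ‖g x - g 0‖ ≤ (B * (1 + x) ^ k) * ‖x - 0‖ := by
    refine Convex.norm_image_sub_le_of_norm_hasDerivWithin_le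
      (fun y _ => (hg y).hasDerivAt.hasDerivWithinAt) (fun y hy => ?_) (convex_Icc 0 x)
      (left_mem_Icc.mpr hx) (right_mem_Icc.mpr hx)
    refine (hB y hy.1).trans ?_
    gcongr
    · linarith [hy.1]
    · linarith [hy.2]
  have h2 : ‖g x‖ ≤ ‖g 0‖ + (B * (1 + x) ^ k) * x := by
    have := norm_sub_norm_le (g x) (g 0)
    rw [Real.norm_eq_abs, abs_of_nonneg (by linarith : (0:ℝ) ≤ x - 0)] at key
    nlinarith [key, this]
  have h3 : (1 : ℝ) ≤ (1 + x) ^ (k + 1) := one_le_pow₀ (by linarith)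
  have h4 : (0 : ℝ) ≤ (1 + x) ^ k := by positivity
  calc ‖g x‖ ≤ ‖g 0‖ + (B * (1 + x) ^ k) * x := h2
    _ ≤ ‖g 0‖ * (1 + x) ^ (k + 1) + B * (1 + x) ^ (k + 1) := by
        have h5 : (B * (1 + x) ^ k) * x ≤ B * (1 + x) ^ (k + 1) := by
          rw [pow_succ]
          nlinarith
        have h6 : ‖g 0‖ ≤ ‖g 0‖ * (1 + x) ^ (k + 1) :=
          le_mul_of_one_le_right (norm_nonneg _) h3
        linarith
    _ = (‖g 0‖ + B) * (1 + x) ^ (k + 1) := by ring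

end Stmt18Aux

open Stmt18Aux MeasureTheory Set Filter in
/-- Order-`q` Taylor expansion of the resolvent of the translation semigroup:
for `φ(t) = (τw)⁻¹ ∫_0^∞ e^{−s/(τw)} h(t+s) ds`,
`‖φ(t) − Σ_{j<q} (τw)^j h^{(j)}(t)‖ ≤ τ^q |w|^{2q+1}/(Re w)^{q+1} sup_{s≥0} ‖h^{(q)}(s)‖`. -/
theorem stmt18
    {Z : Type*} [NormedAddCommGroup Z] [NormedSpace ℂ Z] [CompleteSpace Z]
    (w : ℂ) (hw : 0 < w.re) (τ : ℝ) (hτ : 0 < τ) (q : ℕ) (hq : 1 ≤ q)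
    (h : ℝ → Z) (hh : ContDiff ℝ q h)
    (hbd : ∃ C : ℝ, ∀ s : ℝ, 0 ≤ s → ‖iteratedDeriv q h s‖ ≤ C) :
    letI φ : ℝ → Z := fun t =>
      ((τ : ℂ) * w)⁻¹ • ∫ s in Set.Ioi (0 : ℝ),
        Complex.exp (-(s : ℂ) / ((τ : ℂ) * w)) • h (t + s)
    ∀ t : ℝ, 0 ≤ t →
      ‖φ t - ∑ j : Fin q, (((τ : ℂ) * w) ^ (j : ℕ)) • iteratedDeriv (j : ℕ) h t‖
        ≤ τ ^ q * ‖w‖ ^ (2 * q + 1) / w.re ^ (q + 1)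
            * ⨆ s : Set.Ici (0 : ℝ), ‖iteratedDeriv q h s‖ := by
  intro t ht
  beta_reduce
  have hw0 : w ≠ 0 := fun hww => by simp [hww] at hw
  set d : ℂ := (τ : ℂ) * w with hd_def
  have hd0 : d ≠ 0 := mul_ne_zero (by exact_mod_cast hτ.ne') hw0
  set c : ℂ := d⁻¹ with hc_def
  have hnw : (0 : ℝ) < ‖w‖ := norm_pos_iff.mpr hw0
  have hdre : d.re = τ * w.re := by
    simp [hd_def, Complex.mul_re]
  have hnsq : Complex.normSq d = τ ^ 2 * ‖w‖ ^ 2 := by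
    rw [hd_def, Complex.normSq_mul, ← Complex.sq_norm, ← Complex.sq_norm]
    simp [Real.norm_eq_abs, abs_of_pos hτ, sq]
  have hcre : c.re = w.re / (τ * ‖w‖ ^ 2) := by
    rw [hc_def, Complex.inv_re, hdre, hnsq]
    rw [div_eq_div_iff (by positivity) (by positivity)]
    ring
  have hcre0 : 0 < c.re := by
    rw [hcre]; positivity
  -- the sup bound
  set M : ℝ := ⨆ s : Set.Ici (0 : ℝ), ‖iteratedDeriv q h s‖ with hM_def
  obtain ⟨C, hC⟩ := hbd
  have hbdd : BddAbove (Set.range fun s : Set.Ici (0 : ℝ) => ‖iteratedDeriv q h ↑s‖) := by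
    refine ⟨C, ?_⟩
    rintro _ ⟨s, rfl⟩
    exact hC s s.2
  have hM : ∀ s : ℝ, 0 ≤ s → ‖iteratedDeriv q h s‖ ≤ M :=
    fun s hs => le_ciSup hbdd (⟨s, hs⟩ : Set.Ici (0 : ℝ))
  have hM0 : 0 ≤ M := le_trans (norm_nonneg _) (hM 0 le_rfl)
  -- polynomial growth of all iterated derivatives
  have grow : ∀ m j, j + m = q →
      ∃ B : ℝ, ∃ k : ℕ, ∀ x, 0 ≤ x → ‖iteratedDeriv j h x‖ ≤ B * (1 + x) ^ k := by
    intro m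
    induction m with
    | zero =>
      intro j hj
      refine ⟨M, 0, fun x hx => ?_⟩
      simp only [pow_zero, mul_one]
      rw [show j = q by omega]
      exact hM x hx
    | succ m ih =>
      intro j hj
      obtain ⟨B, k, hBk⟩ := ih (j + 1) (by omega)
      have hjq : (j : ℕ) < q := by omega
      have hdiff : Differentiable ℝ (iteratedDeriv j h) :=
        hh.differentiable_iteratedDeriv j (by exact_mod_cast hjq)
      refine ⟨‖iteratedDeriv j h 0‖ + B, k + 1, growth_step hdiff ?_⟩
      intro x hx
      rw [← iteratedDeriv_succ]
      exact hBk x hx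
  have grow' : ∀ j, j ≤ q →
      ∃ B : ℝ, ∃ k : ℕ, ∀ x, 0 ≤ x → ‖iteratedDeriv j h x‖ ≤ B * (1 + x) ^ k :=
    fun j hj => grow (q - j) j (by omega)
  -- rewrite the exponent
  have hexp_eq : ∀ s : ℝ, -(s : ℂ) / d = -(c * s) := by
    intro s
    rw [hc_def]
    field_simp
  -- main induction
  have key : ∀ n, n ≤ q →
      d⁻¹ • (∫ s in Set.Ioi (0 : ℝ), Complex.exp (-(c * s)) • h (t + s))
        = (∑ j ∈ Finset.range n, d ^ j • iteratedDeriv j h t)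
          + d ^ n • (d⁻¹ •
              ∫ s in Set.Ioi (0 : ℝ), Complex.exp (-(c * s)) • iteratedDeriv n h (t + s)) := by
    intro n
    induction n with
    | zero =>
      intro _
      simp [iteratedDeriv_zero]
    | succ n ih =>
      intro hn
      have hn' : n ≤ q := by omega
      have hnq : n < q := by omega
      rw [ih hn']
      have hdiff : Differentiable ℝ (iteratedDeriv n h) :=
        hh.differentiable_iteratedDeriv n (by exact_mod_cast hnq)
      have hcont' : Continuous (deriv (iteratedDeriv n h)) := by
        rw [← iteratedDeriv_succ]
        exact hh.continuous_iteratedDeriv (n + 1) (by exact_mod_cast hn)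
      obtain ⟨B, k, hBk⟩ := grow' n hn'
      obtain ⟨B', k', hBk'⟩ := grow' (n + 1) hn
      have hBk'' : ∀ x, 0 ≤ x → ‖deriv (iteratedDeriv n h) x‖ ≤ B' * (1 + x) ^ k' := by
        intro x hx
        rw [← iteratedDeriv_succ]
        exact hBk' x hx
      have hstep := step hdiff hcont' hcre0 hBk hBk'' ht
      rw [hstep]
      rw [Finset.sum_range_succ]
      have hinv : c⁻¹ = d := by rw [hc_def, inv_inv]
      rw [hinv]
      have hderiv_eq : (fun s : ℝ => Complex.exp (-(c * s)) • deriv (iteratedDeriv n h) (t + s))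
          = fun s : ℝ => Complex.exp (-(c * s)) • iteratedDeriv (n + 1) h (t + s) := by
        funext s
        rw [iteratedDeriv_succ]
      rw [hderiv_eq]
      set I := ∫ s in Set.Ioi (0 : ℝ), Complex.exp (-(c * s)) • iteratedDeriv (n + 1) h (t + s)
      set v := iteratedDeriv n h t
      match_scalars
      · ring
      · field_simp
      · field_simp
        try ring
  -- specialize at n = q
  have hkey := key q le_rfl
  -- identify the integral with the c-form
  have hφ : (∫ s in Set.Ioi (0 : ℝ), Complex.exp (-(s : ℂ) / d) • h (t + s))
      = ∫ s in Set.Ioi (0 : ℝ), Complex.exp (-(c * s)) • h (t + s) := by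
    refine setIntegral_congr_fun measurableSet_Ioi fun s _ => ?_
    rw [hexp_eq s]
  -- the Fin sum is the range sum
  have hsum : (∑ j : Fin q, (d ^ (j : ℕ)) • iteratedDeriv (j : ℕ) h t)
      = ∑ j ∈ Finset.range q, d ^ j • iteratedDeriv j h t :=
    Fin.sum_univ_eq_sum_range (fun j => d ^ j • iteratedDeriv j h t) q
  rw [hφ, hkey, hsum]
  rw [add_sub_cancel_left]
  -- now bound the remainder
  set I := ∫ s in Set.Ioi (0 : ℝ), Complex.exp (-(c * s)) • iteratedDeriv q h (t + s) with hI_def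
  have hInorm : ‖I‖ ≤ M * (c.re)⁻¹ := by
    have hMpoly : ∀ x, 0 ≤ x → ‖iteratedDeriv q h x‖ ≤ M * (1 + x) ^ 0 := by
      intro x hx; simpa using hM x hx
    have hdom : Integrable (fun s : ℝ => M * ((1 + s) ^ 0 * Real.exp (-(c.re * s))))
        (volume.restrict (Set.Ioi 0)) := by
      exact (int_one_add_pow_exp hcre0 0).const_mul M
    have hb : ‖I‖ ≤ ∫ s in Set.Ioi (0 : ℝ), M * ((1 + s) ^ 0 * Real.exp (-(c.re * s))) := by
      refine norm_integral_le_of_norm_le hdom ?_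
      rw [ae_restrict_iff' measurableSet_Ioi]
      filter_upwards with s hs
      have := norm_exp_smul_le (c := c) hMpoly ht (le_of_lt hs)
      simpa using this
    refine hb.trans ?_
    simp only [pow_zero, one_mul]
    rw [MeasureTheory.integral_const_mul, integral_exp_neg_mul hcre0]
  have hnd : ‖d‖ = τ * ‖w‖ := by
    rw [hd_def, norm_mul, Complex.norm_real]
    rw [Real.norm_eq_abs, abs_of_pos hτ]
  have hnorm : ‖d ^ q • (d⁻¹ • I)‖ = ‖d‖ ^ q * ‖d‖⁻¹ * ‖I‖ := by
    rw [norm_smul, norm_smul, norm_pow, norm_inv, mul_assoc]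
  rw [hnorm]
  have hbound : ‖d‖ ^ q * ‖d‖⁻¹ * ‖I‖ ≤ ‖d‖ ^ q * ‖d‖⁻¹ * (M * (c.re)⁻¹) := by
    have : (0 : ℝ) ≤ ‖d‖ ^ q * ‖d‖⁻¹ := by positivity
    exact mul_le_mul_of_nonneg_left hInorm this
  refine hbound.trans ?_
  -- final numeric inequality
  rw [hnd, hcre]
  have hre_le : w.re ≤ ‖w‖ := by
    exact Complex.re_le_norm w
  have hre_pow : w.re ^ q ≤ ‖w‖ ^ q := pow_le_pow_left₀ hw.le hre_le q
  have hτ0 : τ ≠ 0 := hτ.ne'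
  have hnw0 : ‖w‖ ≠ 0 := hnw.ne'
  have hwre0 : w.re ≠ 0 := hw.ne'
  have heq1 : (τ * ‖w‖) ^ q * (τ * ‖w‖)⁻¹ * (M * (w.re / (τ * ‖w‖ ^ 2))⁻¹)
      = τ ^ q * ‖w‖ ^ (q + 1) * M / w.re := by
    have habs : ‖w‖ ≠ 0 := by
      simpa using hnw0
    rw [inv_div, eq_div_iff hwre0, mul_pow]
    field_simp [hτ0, habs, hwre0]
    ring
  rw [heq1]
  rw [show τ ^ q * ‖w‖ ^ (2 * q + 1) / w.re ^ (q + 1) * M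
      = (τ ^ q * ‖w‖ ^ (2 * q + 1) * M) / w.re ^ (q + 1) by ring]
  rw [div_le_div_iff₀ (by positivity) (by positivity)]
  calc τ ^ q * ‖w‖ ^ (q + 1) * M * w.re ^ (q + 1)
      = (τ ^ q * ‖w‖ ^ (q + 1) * M * w.re) * w.re ^ q := by ring
    _ ≤ (τ ^ q * ‖w‖ ^ (q + 1) * M * w.re) * ‖w‖ ^ q := by
        have hpos : (0 : ℝ) ≤ τ ^ q * ‖w‖ ^ (q + 1) * M * w.re := by positivity
        exact mul_le_mul_of_nonneg_left hre_pow hpos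
    _ = τ ^ q * ‖w‖ ^ (2 * q + 1) * M * w.re := by
        rw [show 2 * q + 1 = (q + 1) + q by ring, pow_add]
        ring
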